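/- arXiv:2308.02282 — 2 statements merged into one kernel-verified Lean document; each statement's English description precedes it below -/
import Mathlib

section
/- (Domain adaptation bound.) For any hypothesis h ∈ H, the target error satisfies ε_Q(h) ≤ λ + ε_P(h) + (1/2) d_{HΔH}(Q,P), where λ = min_{h'∈H} (ε_P(h') + ε_Q(h')) is the error of an ideal joint hypothesis. -/
open MeasureTheory Finset

variable {X : Type*}

/-- Interpret a Boolean hypothesis value as a real number in {0,1}. -/
noncomputable def b2r (b : Bool) : ℝ := if b then 1 else 0

/-- The H-divergence: d_H(P,Q) = 2 · sup_{h∈H} |P({h=1}) − Q({h=1})|. -/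
noncomputable def dH [MeasurableSpace X] (H : Set (X → Bool)) (P Q : Measure X) : ℝ :=
  2 * ⨆ h : H, |(P {x | (h : X → Bool) x = true}).toReal -
    (Q {x | (h : X → Bool) x = true}).toReal|

/-- The error ε_P(h) = E_{x∼P} |h(x) − h*(x)|. -/
noncomputable def err [MeasurableSpace X] (P : Measure X) (h hstar : X → Bool) : ℝ :=
  ∫ x, |b2r (h x) - b2r (hstar x)| ∂P

/-- The symmetric difference hypothesis class HΔH. -/
def sdClass (H : Set (X → Bool)) : Set (X → Bool) :=
  {g | ∃ h ∈ H, ∃ h' ∈ H, g = fun x => xor (h x) (h' x)}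

lemma b2r_abs (a b : Bool) : |b2r a - b2r b| = if xor a b then 1 else 0 := by
  cases a <;> cases b <;> simp [b2r]

lemma measurableSet_xor [MeasurableSpace X] {h h' : X → Bool} (mh : Measurable h)
    (mh' : Measurable h') : MeasurableSet {x | xor (h x) (h' x) = true} := by
  have heq : {x | xor (h x) (h' x) = true} =
      ({x | h x = true} \ {x | h' x = true}) ∪ ({x | h' x = true} \ {x | h x = true}) := by
    ext x; cases hx : h x <;> cases hx' : h' x <;> simp [hx, hx']
  rw [heq]
  exact ((mh (measurableSet_singleton true)).diff (mh' (measurableSet_singleton true))).union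
    ((mh' (measurableSet_singleton true)).diff (mh (measurableSet_singleton true)))

lemma abs_eq_indicator {h h' : X → Bool} :
    (fun x => |b2r (h x) - b2r (h' x)|) =
      Set.indicator {x | xor (h x) (h' x) = true} (fun _ => (1:ℝ)) := by
  ext x
  rw [b2r_abs]
  by_cases hx : xor (h x) (h' x) = true <;>
    simp only [Set.indicator, Set.mem_setOf_eq, hx, if_true, if_false]

lemma err_eq [MeasurableSpace X] (P : Measure X) {h h' : X → Bool} (mh : Measurable h)
    (mh' : Measurable h') :
    err P h h' = (P {x | xor (h x) (h' x) = true}).toReal := by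
  rw [err, abs_eq_indicator, integral_indicator (measurableSet_xor mh mh')]
  simp
  rfl

lemma err_integrable [MeasurableSpace X] (P : Measure X) [IsFiniteMeasure P]
    {h h' : X → Bool} (mh : Measurable h) (mh' : Measurable h') :
    Integrable (fun x => |b2r (h x) - b2r (h' x)|) P := by
  rw [abs_eq_indicator]
  exact (integrable_const 1).indicator (measurableSet_xor mh mh')

lemma err_symm [MeasurableSpace X] (P : Measure X) (h h' : X → Bool) :
    err P h h' = err P h' h := by
  simp [err, abs_sub_comm]

lemma err_triangle [MeasurableSpace X] (P : Measure X) [IsFiniteMeasure P]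
    {h1 h2 h3 : X → Bool} (m1 : Measurable h1) (m2 : Measurable h2) (m3 : Measurable h3) :
    err P h1 h3 ≤ err P h1 h2 + err P h2 h3 := by
  rw [err, err, err, ← integral_add (err_integrable P m1 m2) (err_integrable P m2 m3)]
  refine integral_mono (err_integrable P m1 m3)
    ((err_integrable P m1 m2).add (err_integrable P m2 m3)) ?_
  intro x
  exact abs_sub_le _ _ _

lemma err_le_dH [MeasurableSpace X] (H : Finset (X → Bool))
    (hm : ∀ h ∈ H, Measurable h)
    (P Q : Measure X) [IsProbabilityMeasure P] [IsProbabilityMeasure Q]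
    {h h' : X → Bool} (hh : h ∈ H) (hh' : h' ∈ H) :
    err Q h h' ≤ err P h h' + (1 / 2) * dH (sdClass ↑H) Q P := by
  have mh := hm h hh
  have mh' := hm h' hh'
  set g : X → Bool := fun x => xor (h x) (h' x) with hg
  have hgmem : g ∈ sdClass (↑H : Set (X → Bool)) := ⟨h, hh, h', hh', rfl⟩
  have hbdd : BddAbove (Set.range fun g : sdClass (↑H : Set (X → Bool)) =>
      |(Q {x | (g : X → Bool) x = true}).toReal - (P {x | (g : X → Bool) x = true}).toReal|) := by
    refine ⟨1, ?_⟩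
    rintro r ⟨g', rfl⟩
    have hq : (Q {x | (g' : X → Bool) x = true}).toReal ≤ 1 := by
      rw [← ENNReal.toReal_one]
      exact ENNReal.toReal_mono ENNReal.one_ne_top prob_le_one
    have hp : (P {x | (g' : X → Bool) x = true}).toReal ≤ 1 := by
      rw [← ENNReal.toReal_one]
      exact ENNReal.toReal_mono ENNReal.one_ne_top prob_le_one
    have hq0 : 0 ≤ (Q {x | (g' : X → Bool) x = true}).toReal := ENNReal.toReal_nonneg
    have hp0 : 0 ≤ (P {x | (g' : X → Bool) x = true}).toReal := ENNReal.toReal_nonneg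
    rw [abs_sub_le_iff]
    constructor <;> linarith
  have hle : |(Q {x | g x = true}).toReal - (P {x | g x = true}).toReal| ≤
      ⨆ g' : sdClass (↑H : Set (X → Bool)),
        |(Q {x | (g' : X → Bool) x = true}).toReal - (P {x | (g' : X → Bool) x = true}).toReal| :=
    le_ciSup hbdd (⟨g, hgmem⟩ : sdClass (↑H : Set (X → Bool)))
  have key : err Q h h' - err P h h' ≤ (1 / 2) * dH (sdClass ↑H) Q P := by
    rw [err_eq Q mh mh', err_eq P mh mh', dH]
    calc (Q {x | xor (h x) (h' x) = true}).toReal - (P {x | xor (h x) (h' x) = true}).toReal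
        ≤ |(Q {x | g x = true}).toReal - (P {x | g x = true}).toReal| := le_abs_self _
      _ ≤ _ := hle
      _ = (1/2) * (2 * _) := by ring
  linarith

theorem da_bound [MeasurableSpace X] (H : Finset (X → Bool)) (hne : H.Nonempty)
    (hm : ∀ h ∈ H, Measurable h) (hstar : X → Bool) (hms : Measurable hstar)
    (P Q : Measure X) [IsProbabilityMeasure P] [IsProbabilityMeasure Q]
    (h : X → Bool) (hh : h ∈ H) :
    err Q h hstar ≤ (H.inf' hne fun h' => err P h' hstar + err Q h' hstar)
      + err P h hstar + (1 / 2) * dH (sdClass ↑H) Q P := by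
  obtain ⟨h'', hmem, heq⟩ := Finset.exists_mem_eq_inf' hne
    (fun h' => err P h' hstar + err Q h' hstar)
  rw [heq]
  have mh := hm h hh
  have mh'' := hm h'' hmem
  have t1 : err Q h hstar ≤ err Q h h'' + err Q h'' hstar :=
    err_triangle Q mh mh'' hms
  have t2 : err Q h h'' ≤ err P h h'' + (1 / 2) * dH (sdClass ↑H) Q P :=
    err_le_dH H hm P Q hh hmem
  have t3 : err P h h'' ≤ err P h hstar + err P hstar h'' :=
    err_triangle P mh hms mh''
  have t4 : err P hstar h'' = err P h'' hstar := err_symm P hstar h''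
  linarith
end

section
/- The difference in errors of two hypotheses from H under distributions P and Q is controlled by the HΔH-divergence: |[ε_P(h) − ε_P(h')] − [ε_Q(h) − ε_Q(h')]| ≤ d_{HΔH}(P,Q) for all h, h' ∈ H, assuming the ideal labeling function h* lies in H. -/
open MeasureTheory Finset

variable {X : Type*}

lemma err_eq_measure [MeasurableSpace X] (P : Measure X) (h hstar : X → Bool)
    (hmh : Measurable h) (hms : Measurable hstar) :
    err P h hstar = (P {x | xor (h x) (hstar x) = true}).toReal := by
  have hg : Measurable fun x => xor (h x) (hstar x) :=
    (measurable_of_countable fun p : Bool × Bool => xor p.1 p.2).comp (hmh.prodMk hms)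
  have hs : MeasurableSet {x | xor (h x) (hstar x) = true} :=
    hg (measurableSet_singleton true)
  have key : ∀ x, |b2r (h x) - b2r (hstar x)| =
      Set.indicator {x | xor (h x) (hstar x) = true} (fun _ => (1:ℝ)) x := by
    intro x
    by_cases hx : x ∈ {x | xor (h x) (hstar x) = true}
    · rw [Set.indicator_of_mem hx]
      simp only [Set.mem_setOf_eq] at hx
      revert hx; cases h x <;> cases hstar x <;> simp [b2r]
    · rw [Set.indicator_of_notMem hx]
      simp only [Set.mem_setOf_eq] at hx
      revert hx; cases h x <;> cases hstar x <;> simp [b2r]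
  rw [err]
  simp_rw [key]
  rw [integral_indicator_const (1:ℝ) hs, smul_eq_mul, mul_one, measureReal_def]

theorem err_diff_le_sd_div [MeasurableSpace X] (H : Set (X → Bool))
    (hm : ∀ h ∈ H, Measurable h) (hstar : X → Bool) (hstarH : hstar ∈ H)
    (P Q : Measure X) [IsProbabilityMeasure P] [IsProbabilityMeasure Q]
    (h h' : X → Bool) (hh : h ∈ H) (hh' : h' ∈ H) :
    |(err P h hstar - err P h' hstar) - (err Q h hstar - err Q h' hstar)| ≤
      dH (sdClass H) P Q := by
  set g : X → Bool := fun x => xor (h x) (hstar x) with hgdef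
  set g' : X → Bool := fun x => xor (h' x) (hstar x) with hg'def
  have hgmem : g ∈ sdClass H := ⟨h, hh, hstar, hstarH, rfl⟩
  have hg'mem : g' ∈ sdClass H := ⟨h', hh', hstar, hstarH, rfl⟩
  have heP : err P h hstar = (P {x | g x = true}).toReal :=
    err_eq_measure P h hstar (hm h hh) (hm hstar hstarH)
  have heP' : err P h' hstar = (P {x | g' x = true}).toReal :=
    err_eq_measure P h' hstar (hm h' hh') (hm hstar hstarH)
  have heQ : err Q h hstar = (Q {x | g x = true}).toReal :=
    err_eq_measure Q h hstar (hm h hh) (hm hstar hstarH)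
  have heQ' : err Q h' hstar = (Q {x | g' x = true}).toReal :=
    err_eq_measure Q h' hstar (hm h' hh') (hm hstar hstarH)
  -- boundedness of the sup
  have hbdd : BddAbove (Set.range fun k : sdClass H =>
      |(P {x | (k : X → Bool) x = true}).toReal -
        (Q {x | (k : X → Bool) x = true}).toReal|) := by
    refine ⟨1, ?_⟩
    rintro r ⟨k, rfl⟩
    have h1 : (P {x | (k : X → Bool) x = true}).toReal ≤ 1 := by
      have := prob_le_one (μ := P) (s := {x | (k : X → Bool) x = true})
      simpa using ENNReal.toReal_le_of_le_ofReal zero_le_one (by simpa using this)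
    have h2 : (Q {x | (k : X → Bool) x = true}).toReal ≤ 1 := by
      have := prob_le_one (μ := Q) (s := {x | (k : X → Bool) x = true})
      simpa using ENNReal.toReal_le_of_le_ofReal zero_le_one (by simpa using this)
    have h3 : 0 ≤ (P {x | (k : X → Bool) x = true}).toReal := ENNReal.toReal_nonneg
    have h4 : 0 ≤ (Q {x | (k : X → Bool) x = true}).toReal := ENNReal.toReal_nonneg
    rw [abs_sub_le_iff]; constructor <;> linarith
  have hle1 : |(P {x | g x = true}).toReal - (Q {x | g x = true}).toReal| ≤
      ⨆ k : sdClass H, |(P {x | (k : X → Bool) x = true}).toReal -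
        (Q {x | (k : X → Bool) x = true}).toReal| :=
    le_ciSup hbdd ⟨g, hgmem⟩
  have hle2 : |(P {x | g' x = true}).toReal - (Q {x | g' x = true}).toReal| ≤
      ⨆ k : sdClass H, |(P {x | (k : X → Bool) x = true}).toReal -
        (Q {x | (k : X → Bool) x = true}).toReal| :=
    le_ciSup hbdd ⟨g', hg'mem⟩
  rw [heP, heP', heQ, heQ', dH]
  have habs : |((P {x | g x = true}).toReal - (P {x | g' x = true}).toReal) -
      ((Q {x | g x = true}).toReal - (Q {x | g' x = true}).toReal)| ≤
      |(P {x | g x = true}).toReal - (Q {x | g x = true}).toReal| +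
      |(P {x | g' x = true}).toReal - (Q {x | g' x = true}).toReal| := by
    have := abs_sub (((P {x | g x = true}).toReal - (Q {x | g x = true}).toReal))
      (((P {x | g' x = true}).toReal - (Q {x | g' x = true}).toReal))
    calc |((P {x | g x = true}).toReal - (P {x | g' x = true}).toReal) -
        ((Q {x | g x = true}).toReal - (Q {x | g' x = true}).toReal)|
        = |((P {x | g x = true}).toReal - (Q {x | g x = true}).toReal) -
          ((P {x | g' x = true}).toReal - (Q {x | g' x = true}).toReal)| := by ring_nf
      _ ≤ _ := abs_sub _ _
  linarith
end
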